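/- arXiv:1511.08946 — 2 statements merged into one kernel-verified Lean document; each statement's English description precedes it below -/
import Mathlib

section
/- Under hypotheses (H1)–(H3) with σ ∈ (α+KL, β−KL), the map 𝒯(φ, x₀, t₀)(t) = Λ_A(t,t₀)x₀ + ∫_{t₀}^{t} Λ_A(t,s) F(φ(s)) ds − ∫_{t}^{∞} Λ_B(t,s) G(φ(s)) ds is a contraction on the space F_{σ,t₀} = {φ ∈ C([t₀,∞), X×Y) : sup_{t≥t₀} e^{−σ(t−t₀)}‖φ(t)‖ < ∞} equipped with the norm ‖φ‖_σ = sup_{t≥t₀} e^{−σ(t−t₀)}‖φ(t)‖, with contraction constant at most κ = max{KL/(σ−α), KL/(β−σ)} < 1. -/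
open MeasureTheory

private lemma exp_decay_integrableOn {c : ℝ} (t : ℝ) (hc : 0 < c) :
    IntegrableOn (fun s => Real.exp (c * (t - s))) (Set.Ici t) := by
  have h : (fun s : ℝ => Real.exp (c * (t - s)))
      = fun s => Real.exp (c * t) * Real.exp (-c * s) := by
    funext s; rw [← Real.exp_add]; ring_nf
  rw [h, integrableOn_Ici_iff_integrableOn_Ioi]
  exact (exp_neg_integrableOn_Ioi t hc).const_mul _

private lemma exp_decay_integral {c : ℝ} (t : ℝ) (hc : 0 < c) :
    ∫ s in Set.Ici t, Real.exp (c * (t - s)) = 1 / c := by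
  rw [MeasureTheory.integral_Ici_eq_integral_Ioi]
  have hder : ∀ s ∈ Set.Ici t, HasDerivAt (fun u => -(Real.exp (c * (t - u)) / c))
      (Real.exp (c * (t - s))) s := by
    intro s _
    have h1 : HasDerivAt (fun u : ℝ => c * (t - u)) (-c) s := by
      simpa using ((hasDerivAt_id s).const_sub t).const_mul c
    have h2 := (h1.exp.div_const c).neg
    refine h2.congr_deriv ?_
    field_simp
  have hbot : Filter.Tendsto (fun s : ℝ => c * (t - s)) Filter.atTop Filter.atBot := by
    have h1 : Filter.Tendsto (fun s : ℝ => c * t + -(c * s)) Filter.atTop Filter.atBot :=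
      Filter.tendsto_atBot_add_const_left _ _
        (Filter.tendsto_neg_atTop_atBot.comp (Filter.Tendsto.const_mul_atTop hc Filter.tendsto_id))
    convert h1 using 2 with s
    ring
  have htend : Filter.Tendsto (fun s => -(Real.exp (c * (t - s)) / c)) Filter.atTop (nhds 0) := by
    have := ((Real.tendsto_exp_atBot.comp hbot).div_const c).neg
    simpa using this
  have hint : IntegrableOn (fun s => Real.exp (c * (t - s))) (Set.Ioi t) :=
    (integrableOn_Ici_iff_integrableOn_Ioi).mp (exp_decay_integrableOn t hc)
  rw [MeasureTheory.integral_Ioi_of_hasDerivAt_of_tendsto' hder hint htend]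
  simp

private lemma exp_int_Icc_le {c : ℝ} (a b : ℝ) (hc : 0 < c) :
    ∫ s in a..b, Real.exp (c * (s - b)) ≤ 1 / c := by
  have hder : ∀ s ∈ Set.uIcc a b, HasDerivAt (fun u => Real.exp (c * (u - b)) / c)
      (Real.exp (c * (s - b))) s := by
    intro s _
    have h1 : HasDerivAt (fun u : ℝ => c * (u - b)) c s := by
      simpa using ((hasDerivAt_id s).sub_const b).const_mul c
    have h2 := h1.exp.div_const c
    refine h2.congr_deriv ?_
    field_simp
  have hint : IntervalIntegrable (fun s => Real.exp (c * (s - b))) volume a b :=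
    (Real.continuous_exp.comp (by continuity)).intervalIntegrable a b
  rw [intervalIntegral.integral_eq_sub_of_hasDerivAt hder hint]
  have h3 : 0 ≤ Real.exp (c * (a - b)) / c := by positivity
  simp only [sub_self, mul_zero, Real.exp_zero]
  linarith

theorem lyapunov_perron_contraction
    {X Y : Type*} [NormedAddCommGroup X] [NormedSpace ℝ X] [CompleteSpace X]
    [NormedAddCommGroup Y] [NormedSpace ℝ Y] [CompleteSpace Y]
    (ΛA : ℝ → ℝ → X →L[ℝ] X) (ΛB : ℝ → ℝ → Y →L[ℝ] Y)
    (F : ℝ → X × Y → X) (G : ℝ → X × Y → Y)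
    (K L α β σ t₀ : ℝ) (x₀ : X)
    (hK : 1 ≤ K) (hL : 0 < L) (hαβ : α < β)
    (hΛA : ∀ t s, s ≤ t → ‖ΛA t s‖ ≤ K * Real.exp (α * (t - s)))
    (hΛB : ∀ t s, t ≤ s → ‖ΛB t s‖ ≤ K * Real.exp (β * (t - s)))
    (hΛAc : Continuous fun p : ℝ × ℝ => ΛA p.1 p.2)
    (hΛBc : Continuous fun p : ℝ × ℝ => ΛB p.1 p.2)
    (hFc : Continuous fun p : ℝ × (X × Y) => F p.1 p.2)
    (hGc : Continuous fun p : ℝ × (X × Y) => G p.1 p.2)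
    (hF0 : ∀ t, F t 0 = 0) (hG0 : ∀ t, G t 0 = 0)
    (hLip : ∀ t z₁ z₂, max ‖F t z₁ - F t z₂‖ ‖G t z₁ - G t z₂‖ ≤ L * ‖z₁ - z₂‖)
    (hgap : L < (β - α) / (2 * K))
    (hσ1 : α + K * L < σ) (hσ2 : σ < β - K * L) :
    max (K * L / (σ - α)) (K * L / (β - σ)) < 1 ∧
    ∀ φ₁ φ₂ : ℝ → X × Y,
      ContinuousOn φ₁ (Set.Ici t₀) → ContinuousOn φ₂ (Set.Ici t₀) →
      BddAbove ((fun s => Real.exp (-σ * (s - t₀)) * ‖φ₁ s‖) '' Set.Ici t₀) →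
      BddAbove ((fun s => Real.exp (-σ * (s - t₀)) * ‖φ₂ s‖) '' Set.Ici t₀) →
      ∀ t, t₀ ≤ t →
        Real.exp (-σ * (t - t₀)) *
            ‖((ΛA t t₀ x₀ + ∫ s in t₀..t, ΛA t s (F s (φ₁ s)),
                -∫ s in Set.Ici t, ΛB t s (G s (φ₁ s))) : X × Y) -
              (ΛA t t₀ x₀ + ∫ s in t₀..t, ΛA t s (F s (φ₂ s)),
                -∫ s in Set.Ici t, ΛB t s (G s (φ₂ s)))‖
          ≤ max (K * L / (σ - α)) (K * L / (β - σ)) *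
              sSup ((fun s => Real.exp (-σ * (s - t₀)) * ‖φ₁ s - φ₂ s‖) '' Set.Ici t₀) := by
  have hK0 : (0:ℝ) < K := lt_of_lt_of_le one_pos hK
  have hKL : 0 < K * L := mul_pos hK0 hL
  have hσα : 0 < σ - α := by nlinarith
  have hβσ : 0 < β - σ := by nlinarith
  have hκ1 : K * L / (σ - α) < 1 := (div_lt_one hσα).mpr (by nlinarith)
  have hκ2 : K * L / (β - σ) < 1 := (div_lt_one hβσ).mpr (by nlinarith)
  refine ⟨max_lt hκ1 hκ2, ?_⟩
  intro φ₁ φ₂ hc1 hc2 hb1 hb2 t ht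
  obtain ⟨C₁, hC₁⟩ := hb1
  obtain ⟨C₂, hC₂⟩ := hb2
  have hGL : ∀ s z, ‖G s z‖ ≤ L * ‖z‖ := by
    intro s z
    have h := hLip s z 0
    rw [hG0, hF0, sub_zero, sub_zero, sub_zero] at h
    exact le_trans (le_max_right _ _) h
  have hFdiff : ∀ s z₁ z₂, ‖F s z₁ - F s z₂‖ ≤ L * ‖z₁ - z₂‖ :=
    fun s z₁ z₂ => le_trans (le_max_left _ _) (hLip s z₁ z₂)
  have hGdiff : ∀ s z₁ z₂, ‖G s z₁ - G s z₂‖ ≤ L * ‖z₁ - z₂‖ :=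
    fun s z₁ z₂ => le_trans (le_max_right _ _) (hLip s z₁ z₂)
  set M := sSup ((fun s => Real.exp (-σ * (s - t₀)) * ‖φ₁ s - φ₂ s‖) '' Set.Ici t₀) with hMdef
  have hbdd : BddAbove ((fun s => Real.exp (-σ * (s - t₀)) * ‖φ₁ s - φ₂ s‖) '' Set.Ici t₀) := by
    refine ⟨C₁ + C₂, ?_⟩
    rintro x ⟨s, hs, rfl⟩
    have h1 := hC₁ ⟨s, hs, rfl⟩
    have h2 := hC₂ ⟨s, hs, rfl⟩
    have hn : ‖φ₁ s - φ₂ s‖ ≤ ‖φ₁ s‖ + ‖φ₂ s‖ := norm_sub_le _ _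
    have he : 0 < Real.exp (-σ * (s - t₀)) := Real.exp_pos _
    simp only at h1 h2 ⊢
    nlinarith
  have hM : ∀ s, t₀ ≤ s → ‖φ₁ s - φ₂ s‖ ≤ M * Real.exp (σ * (s - t₀)) := by
    intro s hs
    have h1 : Real.exp (-σ * (s - t₀)) * ‖φ₁ s - φ₂ s‖ ≤ M :=
      le_csSup hbdd ⟨s, hs, rfl⟩
    have he : (0:ℝ) < Real.exp (σ * (s - t₀)) := Real.exp_pos _
    calc ‖φ₁ s - φ₂ s‖
        = Real.exp (σ * (s - t₀)) * (Real.exp (-σ * (s - t₀)) * ‖φ₁ s - φ₂ s‖) := by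
          rw [← mul_assoc, ← Real.exp_add]
          have : σ * (s - t₀) + -σ * (s - t₀) = 0 := by ring
          rw [this, Real.exp_zero, one_mul]
      _ ≤ Real.exp (σ * (s - t₀)) * M := mul_le_mul_of_nonneg_left h1 he.le
      _ = M * Real.exp (σ * (s - t₀)) := mul_comm _ _
  have hM0 : 0 ≤ M :=
    le_trans (by positivity) (le_csSup hbdd ⟨t₀, Set.self_mem_Ici, rfl⟩)
  -- first component
  have hsub : Set.uIcc t₀ t ⊆ Set.Ici t₀ := by
    rw [Set.uIcc_of_le ht]; exact Set.Icc_subset_Ici_self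
  have hcontA : ∀ (φ : ℝ → X × Y), ContinuousOn φ (Set.Ici t₀) →
      ContinuousOn (fun s => ΛA t s (F s (φ s))) (Set.uIcc t₀ t) := by
    intro φ hφ
    apply ContinuousOn.clm_apply
    · exact (hΛAc.comp (continuous_const.prodMk continuous_id)).continuousOn
    · exact hFc.comp_continuousOn (continuousOn_id.prodMk (hφ.mono hsub))
  have hintA1 : IntervalIntegrable (fun s => ΛA t s (F s (φ₁ s))) volume t₀ t :=
    (hcontA φ₁ hc1).intervalIntegrable
  have hintA2 : IntervalIntegrable (fun s => ΛA t s (F s (φ₂ s))) volume t₀ t :=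
    (hcontA φ₂ hc2).intervalIntegrable
  have hfirst : Real.exp (-σ * (t - t₀)) *
      ‖(∫ s in t₀..t, ΛA t s (F s (φ₁ s))) - ∫ s in t₀..t, ΛA t s (F s (φ₂ s))‖
      ≤ K * L / (σ - α) * M := by
    rw [← intervalIntegral.integral_sub hintA1 hintA2]
    have hbound : ∀ s ∈ Set.Icc t₀ t,
        ‖ΛA t s (F s (φ₁ s)) - ΛA t s (F s (φ₂ s))‖ ≤
        (K * L * M * Real.exp (σ * (t - t₀))) * Real.exp ((σ - α) * (s - t)) := by
      intro s hs
      have h1 : ΛA t s (F s (φ₁ s)) - ΛA t s (F s (φ₂ s))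
          = ΛA t s (F s (φ₁ s) - F s (φ₂ s)) := (map_sub _ _ _).symm
      rw [h1]
      have hexp : Real.exp (α * (t - s)) * Real.exp (σ * (s - t₀))
          = Real.exp (σ * (t - t₀)) * Real.exp ((σ - α) * (s - t)) := by
        rw [← Real.exp_add, ← Real.exp_add]; congr 1; ring
      calc ‖ΛA t s (F s (φ₁ s) - F s (φ₂ s))‖
          ≤ ‖ΛA t s‖ * ‖F s (φ₁ s) - F s (φ₂ s)‖ := ContinuousLinearMap.le_opNorm _ _
        _ ≤ (K * Real.exp (α * (t - s))) * (L * ‖φ₁ s - φ₂ s‖) :=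
            mul_le_mul (hΛA t s hs.2) (hFdiff s _ _) (norm_nonneg _) (by positivity)
        _ ≤ (K * Real.exp (α * (t - s))) * (L * (M * Real.exp (σ * (s - t₀)))) := by
            have := hM s hs.1
            have hLle : L * ‖φ₁ s - φ₂ s‖ ≤ L * (M * Real.exp (σ * (s - t₀))) :=
              mul_le_mul_of_nonneg_left this hL.le
            exact mul_le_mul_of_nonneg_left hLle (by positivity)
        _ = (K * L * M) * (Real.exp (α * (t - s)) * Real.exp (σ * (s - t₀))) := by ring
        _ = (K * L * M * Real.exp (σ * (t - t₀))) * Real.exp ((σ - α) * (s - t)) := by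
            rw [hexp]; ring
    have hA := intervalIntegral.norm_integral_le_integral_norm
      (f := fun s => ΛA t s (F s (φ₁ s)) - ΛA t s (F s (φ₂ s))) (μ := volume) ht
    have hgint : IntervalIntegrable
        (fun s => (K * L * M * Real.exp (σ * (t - t₀))) * Real.exp ((σ - α) * (s - t)))
        volume t₀ t :=
      ((continuous_const.mul (Real.continuous_exp.comp (by continuity))).intervalIntegrable _ _)
    have hmono : (∫ s in t₀..t, ‖ΛA t s (F s (φ₁ s)) - ΛA t s (F s (φ₂ s))‖)
        ≤ ∫ s in t₀..t, (K * L * M * Real.exp (σ * (t - t₀))) * Real.exp ((σ - α) * (s - t)) :=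
      intervalIntegral.integral_mono_on ht ((hintA1.sub hintA2).norm) hgint hbound
    have hval : (∫ s in t₀..t, (K * L * M * Real.exp (σ * (t - t₀))) * Real.exp ((σ - α) * (s - t)))
        ≤ (K * L * M * Real.exp (σ * (t - t₀))) * (1 / (σ - α)) := by
      rw [intervalIntegral.integral_const_mul]
      exact mul_le_mul_of_nonneg_left (exp_int_Icc_le t₀ t hσα) (by positivity)
    have hfin : ‖∫ s in t₀..t, (ΛA t s (F s (φ₁ s)) - ΛA t s (F s (φ₂ s)))‖
        ≤ (K * L * M * Real.exp (σ * (t - t₀))) * (1 / (σ - α)) :=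
      le_trans hA (le_trans hmono hval)
    calc Real.exp (-σ * (t - t₀)) * ‖∫ s in t₀..t, (ΛA t s (F s (φ₁ s)) - ΛA t s (F s (φ₂ s)))‖
        ≤ Real.exp (-σ * (t - t₀)) * ((K * L * M * Real.exp (σ * (t - t₀))) * (1 / (σ - α))) :=
          mul_le_mul_of_nonneg_left hfin (Real.exp_pos _).le
      _ = (Real.exp (-σ * (t - t₀)) * Real.exp (σ * (t - t₀))) * (K * L * M * (1 / (σ - α))) := by
          ring
      _ = K * L / (σ - α) * M := by
          rw [← Real.exp_add]
          have : -σ * (t - t₀) + σ * (t - t₀) = 0 := by ring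
          rw [this, Real.exp_zero, one_mul]
          ring
  -- second component
  have hIciSub : Set.Ici t ⊆ Set.Ici t₀ := Set.Ici_subset_Ici.mpr ht
  have hcontB : ∀ (φ : ℝ → X × Y), ContinuousOn φ (Set.Ici t₀) →
      ContinuousOn (fun s => ΛB t s (G s (φ s))) (Set.Ici t) := by
    intro φ hφ
    apply ContinuousOn.clm_apply
    · exact (hΛBc.comp (continuous_const.prodMk continuous_id)).continuousOn
    · exact hGc.comp_continuousOn (continuousOn_id.prodMk (hφ.mono hIciSub))
  have key : ∀ (φ : ℝ → X × Y) (C : ℝ), ContinuousOn φ (Set.Ici t₀) →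
      (∀ s ∈ Set.Ici t₀, Real.exp (-σ * (s - t₀)) * ‖φ s‖ ≤ C) →
      IntegrableOn (fun s => ΛB t s (G s (φ s))) (Set.Ici t) := by
    intro φ C hφ hφC
    refine Integrable.mono'
      ((exp_decay_integrableOn t hβσ).const_mul (K * L * C * Real.exp (σ * (t - t₀))))
      (((hcontB φ hφ).aestronglyMeasurable measurableSet_Ici)) ?_
    rw [ae_restrict_iff' measurableSet_Ici]
    refine Filter.Eventually.of_forall (fun s hs => ?_)
    have hts : t ≤ s := hs
    have ht₀s : t₀ ≤ s := le_trans ht hts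
    have hφb : ‖φ s‖ ≤ C * Real.exp (σ * (s - t₀)) := by
      have h1 := hφC s ht₀s
      have he : (0:ℝ) < Real.exp (σ * (s - t₀)) := Real.exp_pos _
      calc ‖φ s‖ = Real.exp (σ * (s - t₀)) * (Real.exp (-σ * (s - t₀)) * ‖φ s‖) := by
            rw [← mul_assoc, ← Real.exp_add]
            have : σ * (s - t₀) + -σ * (s - t₀) = 0 := by ring
            rw [this, Real.exp_zero, one_mul]
        _ ≤ Real.exp (σ * (s - t₀)) * C := mul_le_mul_of_nonneg_left h1 he.le
        _ = C * Real.exp (σ * (s - t₀)) := mul_comm _ _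
    have hC0 : 0 ≤ C := le_trans (by positivity) (hφC t₀ Set.self_mem_Ici)
    have hexp : Real.exp (β * (t - s)) * Real.exp (σ * (s - t₀))
        = Real.exp (σ * (t - t₀)) * Real.exp ((β - σ) * (t - s)) := by
      rw [← Real.exp_add, ← Real.exp_add]; congr 1; ring
    calc ‖ΛB t s (G s (φ s))‖
        ≤ ‖ΛB t s‖ * ‖G s (φ s)‖ := ContinuousLinearMap.le_opNorm _ _
      _ ≤ (K * Real.exp (β * (t - s))) * (L * ‖φ s‖) :=
          mul_le_mul (hΛB t s hts) (hGL s _) (norm_nonneg _) (by positivity)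
      _ ≤ (K * Real.exp (β * (t - s))) * (L * (C * Real.exp (σ * (s - t₀)))) := by
          have hLle : L * ‖φ s‖ ≤ L * (C * Real.exp (σ * (s - t₀))) :=
            mul_le_mul_of_nonneg_left hφb hL.le
          exact mul_le_mul_of_nonneg_left hLle (by positivity)
      _ = (K * L * C) * (Real.exp (β * (t - s)) * Real.exp (σ * (s - t₀))) := by ring
      _ = K * L * C * Real.exp (σ * (t - t₀)) * Real.exp ((β - σ) * (t - s)) := by
          rw [hexp]; ring
  have hB1 : IntegrableOn (fun s => ΛB t s (G s (φ₁ s))) (Set.Ici t) :=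
    key φ₁ C₁ hc1 (fun s hs => hC₁ ⟨s, hs, rfl⟩)
  have hB2 : IntegrableOn (fun s => ΛB t s (G s (φ₂ s))) (Set.Ici t) :=
    key φ₂ C₂ hc2 (fun s hs => hC₂ ⟨s, hs, rfl⟩)
  have hsecond : Real.exp (-σ * (t - t₀)) *
      ‖(∫ s in Set.Ici t, ΛB t s (G s (φ₁ s))) - ∫ s in Set.Ici t, ΛB t s (G s (φ₂ s))‖
      ≤ K * L / (β - σ) * M := by
    rw [← integral_sub hB1 hB2]
    have hA := norm_integral_le_integral_norm
      (μ := volume.restrict (Set.Ici t)) (fun s => ΛB t s (G s (φ₁ s)) - ΛB t s (G s (φ₂ s)))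
    have hbound : ∀ s ∈ Set.Ici t,
        ‖ΛB t s (G s (φ₁ s)) - ΛB t s (G s (φ₂ s))‖ ≤
        (K * L * M * Real.exp (σ * (t - t₀))) * Real.exp ((β - σ) * (t - s)) := by
      intro s hs
      have hts : t ≤ s := hs
      have ht₀s : t₀ ≤ s := le_trans ht hts
      have h1 : ΛB t s (G s (φ₁ s)) - ΛB t s (G s (φ₂ s))
          = ΛB t s (G s (φ₁ s) - G s (φ₂ s)) := (map_sub _ _ _).symm
      rw [h1]
      have hexp : Real.exp (β * (t - s)) * Real.exp (σ * (s - t₀))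
          = Real.exp (σ * (t - t₀)) * Real.exp ((β - σ) * (t - s)) := by
        rw [← Real.exp_add, ← Real.exp_add]; congr 1; ring
      calc ‖ΛB t s (G s (φ₁ s) - G s (φ₂ s))‖
          ≤ ‖ΛB t s‖ * ‖G s (φ₁ s) - G s (φ₂ s)‖ := ContinuousLinearMap.le_opNorm _ _
        _ ≤ (K * Real.exp (β * (t - s))) * (L * ‖φ₁ s - φ₂ s‖) :=
            mul_le_mul (hΛB t s hts) (hGdiff s _ _) (norm_nonneg _) (by positivity)
        _ ≤ (K * Real.exp (β * (t - s))) * (L * (M * Real.exp (σ * (s - t₀)))) := by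
            have hLle : L * ‖φ₁ s - φ₂ s‖ ≤ L * (M * Real.exp (σ * (s - t₀))) :=
              mul_le_mul_of_nonneg_left (hM s ht₀s) hL.le
            exact mul_le_mul_of_nonneg_left hLle (by positivity)
        _ = (K * L * M) * (Real.exp (β * (t - s)) * Real.exp (σ * (s - t₀))) := by ring
        _ = (K * L * M * Real.exp (σ * (t - t₀))) * Real.exp ((β - σ) * (t - s)) := by
            rw [hexp]; ring
    have hgint : IntegrableOn
        (fun s => (K * L * M * Real.exp (σ * (t - t₀))) * Real.exp ((β - σ) * (t - s)))
        (Set.Ici t) :=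
      (exp_decay_integrableOn t hβσ).const_mul _
    have hmono : (∫ s in Set.Ici t, ‖ΛB t s (G s (φ₁ s)) - ΛB t s (G s (φ₂ s))‖)
        ≤ ∫ s in Set.Ici t,
          (K * L * M * Real.exp (σ * (t - t₀))) * Real.exp ((β - σ) * (t - s)) := by
      refine integral_mono_ae ((hB1.sub hB2).norm) hgint ?_
      rw [Filter.EventuallyLE, ae_restrict_iff' measurableSet_Ici]
      exact Filter.Eventually.of_forall hbound
    have hval : (∫ s in Set.Ici t,
        (K * L * M * Real.exp (σ * (t - t₀))) * Real.exp ((β - σ) * (t - s)))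
        = (K * L * M * Real.exp (σ * (t - t₀))) * (1 / (β - σ)) := by
      rw [MeasureTheory.integral_const_mul, exp_decay_integral t hβσ]
    have hfin : ‖∫ s in Set.Ici t, (ΛB t s (G s (φ₁ s)) - ΛB t s (G s (φ₂ s)))‖
        ≤ (K * L * M * Real.exp (σ * (t - t₀))) * (1 / (β - σ)) :=
      le_trans hA (le_trans hmono hval.le)
    calc Real.exp (-σ * (t - t₀)) *
        ‖∫ s in Set.Ici t, (ΛB t s (G s (φ₁ s)) - ΛB t s (G s (φ₂ s)))‖
        ≤ Real.exp (-σ * (t - t₀)) * ((K * L * M * Real.exp (σ * (t - t₀))) * (1 / (β - σ))) :=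
          mul_le_mul_of_nonneg_left hfin (Real.exp_pos _).le
      _ = (Real.exp (-σ * (t - t₀)) * Real.exp (σ * (t - t₀))) * (K * L * M * (1 / (β - σ))) := by
          ring
      _ = K * L / (β - σ) * M := by
          rw [← Real.exp_add]
          have : -σ * (t - t₀) + σ * (t - t₀) = 0 := by ring
          rw [this, Real.exp_zero, one_mul]
          ring
  -- assemble
  have hpair : ((ΛA t t₀ x₀ + ∫ s in t₀..t, ΛA t s (F s (φ₁ s)),
        -∫ s in Set.Ici t, ΛB t s (G s (φ₁ s))) : X × Y) -
      (ΛA t t₀ x₀ + ∫ s in t₀..t, ΛA t s (F s (φ₂ s)),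
        -∫ s in Set.Ici t, ΛB t s (G s (φ₂ s)))
      = ((∫ s in t₀..t, ΛA t s (F s (φ₁ s))) - ∫ s in t₀..t, ΛA t s (F s (φ₂ s)),
        (∫ s in Set.Ici t, ΛB t s (G s (φ₂ s))) - ∫ s in Set.Ici t, ΛB t s (G s (φ₁ s))) := by
    rw [Prod.mk_sub_mk, add_sub_add_left_eq_sub, neg_sub_neg]
  rw [hpair, Prod.norm_def]
  simp only
  rw [mul_max_of_nonneg _ _ (Real.exp_pos (-σ * (t - t₀))).le]
  apply max_le
  · exact le_trans hfirst (mul_le_mul_of_nonneg_right (le_max_left _ _) hM0)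
  · rw [norm_sub_rev]
    exact le_trans hsecond (mul_le_mul_of_nonneg_right (le_max_right _ _) hM0)
end

section
/- Under hypotheses (H1)–(H3), the truncated map 𝒯_T(φ, x₀, t₀)(t) = Λ_A(t,t₀)x₀ + ∫_{t₀}^{t} Λ_A(t,s) F(φ(s)) ds − ∫_{t}^{T} Λ_B(t,s) G(φ(s)) ds is a contraction on C([t₀,T], X×Y) with the weighted norm ‖φ‖_{σ,T} = max_{t₀≤t≤T} e^{−σ(t−t₀)}‖φ(t)‖, hence has a unique fixed point φ_T. -/
open MeasureTheory


lemma lp_exp_int (p q a b : ℝ) (h : p ≠ q) :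
    ∫ s in a..b, Real.exp (p*(b-s)) * Real.exp (q*(s-a))
      = (Real.exp (q*(b-a)) - Real.exp (p*(b-a)))/(q-p) := by
  have hqp : q - p ≠ 0 := sub_ne_zero.2 (Ne.symm h)
  have hD : ∀ x ∈ Set.uIcc a b, HasDerivAt
      (fun s => Real.exp (p*b - q*a) * Real.exp ((q-p)*s) / (q-p))
      (Real.exp (p*(b-x)) * Real.exp (q*(x-a))) x := by
    intro x _
    have h1 : HasDerivAt (fun s : ℝ => (q-p)*s) (q-p) x := by
      simpa using (hasDerivAt_id x).const_mul (q-p)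
    have h2 := (h1.exp.const_mul (Real.exp (p*b - q*a))).div_const (q-p)
    refine (h2.congr_deriv ?_); symm
    rw [← Real.exp_add]
    have he : p*(b-x)+q*(x-a) = (p*b - q*a) + (q-p)*x := by ring
    rw [he, Real.exp_add]
    field_simp
  rw [intervalIntegral.integral_eq_sub_of_hasDerivAt hD
    (by apply Continuous.intervalIntegrable; continuity)]
  rw [div_sub_div_same]
  congr 1
  rw [← Real.exp_add, ← Real.exp_add]
  ring_nf

lemma lp_intA (α σ t₀ t : ℝ) (h : α < σ) :
    ∫ s in t₀..t, Real.exp (α*(t-s)) * Real.exp (σ*(s-t₀))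
      ≤ Real.exp (σ*(t-t₀))/(σ-α) := by
  rw [lp_exp_int α σ t₀ t h.ne]
  rw [div_le_div_iff₀ (by linarith) (by linarith)]
  nlinarith [Real.exp_pos (α*(t-t₀)), Real.exp_pos (σ*(t-t₀))]

lemma lp_intB (β σ t₀ t T : ℝ) (h : σ < β) :
    ∫ s in t..T, Real.exp (β*(t-s)) * Real.exp (σ*(s-t₀))
      ≤ Real.exp (σ*(t-t₀))/(β-σ) := by
  have he : ∀ s, Real.exp (β*(t-s)) * Real.exp (σ*(s-t₀))
      = Real.exp (σ*(t-t₀)) * (Real.exp (0*(T-s)) * Real.exp ((σ-β)*(s-t))) := by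
    intro s
    rw [← Real.exp_add, ← Real.exp_add, ← Real.exp_add]
    ring_nf
  simp_rw [he]
  rw [intervalIntegral.integral_const_mul, lp_exp_int 0 (σ-β) t T (by linarith)]
  simp only [zero_mul, Real.exp_zero, sub_zero]
  have h3 : (Real.exp ((σ-β)*(T-t)) - 1)/(σ-β) = (1 - Real.exp ((σ-β)*(T-t)))/(β-σ) := by
    rw [div_eq_div_iff (by linarith) (by linarith)]; ring
  rw [h3, mul_div_assoc', div_le_div_iff₀ (by linarith) (by linarith)]
  nlinarith [mul_pos (mul_pos (Real.exp_pos (σ*(t-t₀))) (Real.exp_pos ((σ-β)*(T-t))))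
    (show (0:ℝ) < β - σ by linarith)]

lemma lp_compA {X Y : Type*} [NormedAddCommGroup X] [NormedSpace ℝ X]
    [NormedAddCommGroup Y] [NormedSpace ℝ Y]
    (ΛA : ℝ → ℝ → X →L[ℝ] X) (F : ℝ → X × Y → X)
    (K L α σ t₀ T : ℝ)
    (hK : 1 ≤ K) (hL : 0 < L) (hασ : α < σ)
    (hΛA : ∀ t s, s ≤ t → ‖ΛA t s‖ ≤ K * Real.exp (α * (t - s)))
    (hΛAc : Continuous fun p : ℝ × ℝ => ΛA p.1 p.2)
    (hFc : Continuous fun p : ℝ × (X × Y) => F p.1 p.2)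
    (hLipF : ∀ t z₁ z₂, ‖F t z₁ - F t z₂‖ ≤ L * ‖z₁ - z₂‖)
    (φ₁ φ₂ : ℝ → X × Y)
    (h₁ : ContinuousOn φ₁ (Set.Icc t₀ T)) (h₂ : ContinuousOn φ₂ (Set.Icc t₀ T))
    (M : ℝ) (hM0 : 0 ≤ M)
    (hM : ∀ s ∈ Set.Icc t₀ T, ‖φ₁ s - φ₂ s‖ ≤ M * Real.exp (σ*(s-t₀)))
    (t : ℝ) (ht : t ∈ Set.Icc t₀ T) :
    ‖(∫ s in t₀..t, ΛA t s (F s (φ₁ s))) - ∫ s in t₀..t, ΛA t s (F s (φ₂ s))‖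
      ≤ K*L/(σ-α) * (M * Real.exp (σ*(t-t₀))) := by
  obtain ⟨ht1, ht2⟩ := ht
  have hsub : Set.Icc t₀ t ⊆ Set.Icc t₀ T := Set.Icc_subset_Icc le_rfl ht2
  have hi : ∀ φ : ℝ → X × Y, ContinuousOn φ (Set.Icc t₀ T) →
      IntervalIntegrable (fun s => ΛA t s (F s (φ s))) volume t₀ t := by
    intro φ hφ
    apply ContinuousOn.intervalIntegrable
    rw [Set.uIcc_of_le ht1]
    refine ContinuousOn.mono ?_ hsub
    exact ((hΛAc.comp (continuous_const.prodMk continuous_id)).continuousOn).clm_apply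
      (hFc.comp_continuousOn (continuousOn_id.prodMk hφ))
  rw [← intervalIntegral.integral_sub (hi φ₁ h₁) (hi φ₂ h₂)]
  have hKLM : (0:ℝ) ≤ K * L * M := by positivity
  have hg : IntervalIntegrable
      (fun s => K*L*M * (Real.exp (α*(t-s)) * Real.exp (σ*(s-t₀)))) volume t₀ t :=
    (Continuous.intervalIntegrable (by continuity) _ _)
  calc ‖∫ s in t₀..t, (ΛA t s (F s (φ₁ s)) - ΛA t s (F s (φ₂ s)))‖
      ≤ |∫ s in t₀..t, K*L*M * (Real.exp (α*(t-s)) * Real.exp (σ*(s-t₀)))| := by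
        apply intervalIntegral.norm_integral_le_abs_of_norm_le _ hg
        filter_upwards [ae_restrict_mem measurableSet_uIoc] with s hs
        rw [Set.uIoc_of_le ht1] at hs
        rw [← map_sub]
        calc ‖ΛA t s (F s (φ₁ s) - F s (φ₂ s))‖
            ≤ ‖ΛA t s‖ * ‖F s (φ₁ s) - F s (φ₂ s)‖ := (ΛA t s).le_opNorm _
          _ ≤ (K * Real.exp (α*(t-s))) * (L * ‖φ₁ s - φ₂ s‖) := by
              apply mul_le_mul (hΛA t s hs.2) (hLipF s _ _) (norm_nonneg _)
              positivity
          _ ≤ (K * Real.exp (α*(t-s))) * (L * (M * Real.exp (σ*(s-t₀)))) := by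
              gcongr
              exact hM s ⟨hs.1.le, hs.2.trans ht2⟩
          _ = K*L*M * (Real.exp (α*(t-s)) * Real.exp (σ*(s-t₀))) := by ring
    _ = ∫ s in t₀..t, K*L*M * (Real.exp (α*(t-s)) * Real.exp (σ*(s-t₀))) :=
        abs_of_nonneg (intervalIntegral.integral_nonneg ht1 (fun u _ => by positivity))
    _ = K*L*M * ∫ s in t₀..t, Real.exp (α*(t-s)) * Real.exp (σ*(s-t₀)) :=
        intervalIntegral.integral_const_mul _ _
    _ ≤ K*L*M * (Real.exp (σ*(t-t₀))/(σ-α)) :=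
        mul_le_mul_of_nonneg_left (lp_intA α σ t₀ t hασ) hKLM
    _ = K*L/(σ-α) * (M * Real.exp (σ*(t-t₀))) := by
        field_simp

lemma lp_compB {X Y : Type*} [NormedAddCommGroup X] [NormedSpace ℝ X]
    [NormedAddCommGroup Y] [NormedSpace ℝ Y]
    (ΛB : ℝ → ℝ → Y →L[ℝ] Y) (G : ℝ → X × Y → Y)
    (K L β σ t₀ T : ℝ)
    (hK : 1 ≤ K) (hL : 0 < L) (hσβ : σ < β)
    (hΛB : ∀ t s, t ≤ s → ‖ΛB t s‖ ≤ K * Real.exp (β * (t - s)))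
    (hΛBc : Continuous fun p : ℝ × ℝ => ΛB p.1 p.2)
    (hGc : Continuous fun p : ℝ × (X × Y) => G p.1 p.2)
    (hLipG : ∀ t z₁ z₂, ‖G t z₁ - G t z₂‖ ≤ L * ‖z₁ - z₂‖)
    (φ₁ φ₂ : ℝ → X × Y)
    (h₁ : ContinuousOn φ₁ (Set.Icc t₀ T)) (h₂ : ContinuousOn φ₂ (Set.Icc t₀ T))
    (M : ℝ) (hM0 : 0 ≤ M)
    (hM : ∀ s ∈ Set.Icc t₀ T, ‖φ₁ s - φ₂ s‖ ≤ M * Real.exp (σ*(s-t₀)))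
    (t : ℝ) (ht : t ∈ Set.Icc t₀ T) :
    ‖(∫ s in t..T, ΛB t s (G s (φ₁ s))) - ∫ s in t..T, ΛB t s (G s (φ₂ s))‖
      ≤ K*L/(β-σ) * (M * Real.exp (σ*(t-t₀))) := by
  obtain ⟨ht1, ht2⟩ := ht
  have hsub : Set.Icc t T ⊆ Set.Icc t₀ T := Set.Icc_subset_Icc ht1 le_rfl
  have hi : ∀ φ : ℝ → X × Y, ContinuousOn φ (Set.Icc t₀ T) →
      IntervalIntegrable (fun s => ΛB t s (G s (φ s))) volume t T := by
    intro φ hφ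
    apply ContinuousOn.intervalIntegrable
    rw [Set.uIcc_of_le ht2]
    refine ContinuousOn.mono ?_ hsub
    exact ((hΛBc.comp (continuous_const.prodMk continuous_id)).continuousOn).clm_apply
      (hGc.comp_continuousOn (continuousOn_id.prodMk hφ))
  rw [← intervalIntegral.integral_sub (hi φ₁ h₁) (hi φ₂ h₂)]
  have hKLM : (0:ℝ) ≤ K * L * M := by positivity
  have hg : IntervalIntegrable
      (fun s => K*L*M * (Real.exp (β*(t-s)) * Real.exp (σ*(s-t₀)))) volume t T :=
    (Continuous.intervalIntegrable (by continuity) _ _)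
  calc ‖∫ s in t..T, (ΛB t s (G s (φ₁ s)) - ΛB t s (G s (φ₂ s)))‖
      ≤ |∫ s in t..T, K*L*M * (Real.exp (β*(t-s)) * Real.exp (σ*(s-t₀)))| := by
        apply intervalIntegral.norm_integral_le_abs_of_norm_le _ hg
        filter_upwards [ae_restrict_mem measurableSet_uIoc] with s hs
        rw [Set.uIoc_of_le ht2] at hs
        rw [← map_sub]
        calc ‖ΛB t s (G s (φ₁ s) - G s (φ₂ s))‖
            ≤ ‖ΛB t s‖ * ‖G s (φ₁ s) - G s (φ₂ s)‖ := (ΛB t s).le_opNorm _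
          _ ≤ (K * Real.exp (β*(t-s))) * (L * ‖φ₁ s - φ₂ s‖) := by
              apply mul_le_mul (hΛB t s hs.1.le) (hLipG s _ _) (norm_nonneg _)
              positivity
          _ ≤ (K * Real.exp (β*(t-s))) * (L * (M * Real.exp (σ*(s-t₀)))) := by
              gcongr
              exact hM s ⟨ht1.trans hs.1.le, hs.2⟩
          _ = K*L*M * (Real.exp (β*(t-s)) * Real.exp (σ*(s-t₀))) := by ring
    _ = ∫ s in t..T, K*L*M * (Real.exp (β*(t-s)) * Real.exp (σ*(s-t₀))) :=
        abs_of_nonneg (intervalIntegral.integral_nonneg ht2 (fun u _ => by positivity))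
    _ = K*L*M * ∫ s in t..T, Real.exp (β*(t-s)) * Real.exp (σ*(s-t₀)) :=
        intervalIntegral.integral_const_mul _ _
    _ ≤ K*L*M * (Real.exp (σ*(t-t₀))/(β-σ)) :=
        mul_le_mul_of_nonneg_left (lp_intB β σ t₀ t T hσβ) hKLM
    _ = K*L/(β-σ) * (M * Real.exp (σ*(t-t₀))) := by
        field_simp


set_option maxHeartbeats 1000000 in
open MeasureTheory in
theorem truncated_lyapunov_perron_contraction_and_fixed_point
    {X Y : Type*} [NormedAddCommGroup X] [NormedSpace ℝ X] [CompleteSpace X]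
    [NormedAddCommGroup Y] [NormedSpace ℝ Y] [CompleteSpace Y]
    (ΛA : ℝ → ℝ → X →L[ℝ] X) (ΛB : ℝ → ℝ → Y →L[ℝ] Y)
    (F : ℝ → X × Y → X) (G : ℝ → X × Y → Y)
    (K L α β σ t₀ T : ℝ) (x₀ : X)
    (hK : 1 ≤ K) (hL : 0 < L) (hαβ : α < β) (hT : t₀ < T)
    (hΛA : ∀ t s, s ≤ t → ‖ΛA t s‖ ≤ K * Real.exp (α * (t - s)))
    (hΛB : ∀ t s, t ≤ s → ‖ΛB t s‖ ≤ K * Real.exp (β * (t - s)))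
    (hΛAc : Continuous fun p : ℝ × ℝ => ΛA p.1 p.2)
    (hΛBc : Continuous fun p : ℝ × ℝ => ΛB p.1 p.2)
    (hFc : Continuous fun p : ℝ × (X × Y) => F p.1 p.2)
    (hGc : Continuous fun p : ℝ × (X × Y) => G p.1 p.2)
    (hF0 : ∀ t, F t 0 = 0) (hG0 : ∀ t, G t 0 = 0)
    (hLip : ∀ t z₁ z₂, max ‖F t z₁ - F t z₂‖ ‖G t z₁ - G t z₂‖ ≤ L * ‖z₁ - z₂‖)
    (hgap : L < (β - α) / (2 * K))
    (hσ1 : α + K * L < σ) (hσ2 : σ < β - K * L) :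
    (∀ φ₁ φ₂ : ℝ → X × Y,
      ContinuousOn φ₁ (Set.Icc t₀ T) → ContinuousOn φ₂ (Set.Icc t₀ T) →
      ∀ t ∈ Set.Icc t₀ T,
        Real.exp (-σ * (t - t₀)) *
            ‖((ΛA t t₀ x₀ + ∫ s in t₀..t, ΛA t s (F s (φ₁ s)),
                -∫ s in t..T, ΛB t s (G s (φ₁ s))) : X × Y) -
              (ΛA t t₀ x₀ + ∫ s in t₀..t, ΛA t s (F s (φ₂ s)),
                -∫ s in t..T, ΛB t s (G s (φ₂ s)))‖
          ≤ max (K * L / (σ - α)) (K * L / (β - σ)) *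
              sSup ((fun s => Real.exp (-σ * (s - t₀)) * ‖φ₁ s - φ₂ s‖) '' Set.Icc t₀ T)) ∧
    ∃ φT : ℝ → X × Y, ContinuousOn φT (Set.Icc t₀ T) ∧
      (∀ t ∈ Set.Icc t₀ T,
        φT t = (ΛA t t₀ x₀ + ∫ s in t₀..t, ΛA t s (F s (φT s)),
                 -∫ s in t..T, ΛB t s (G s (φT s)))) ∧
      ∀ ψ : ℝ → X × Y, ContinuousOn ψ (Set.Icc t₀ T) →
        (∀ t ∈ Set.Icc t₀ T,
          ψ t = (ΛA t t₀ x₀ + ∫ s in t₀..t, ΛA t s (F s (ψ s)),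
                  -∫ s in t..T, ΛB t s (G s (ψ s)))) →
        Set.EqOn φT ψ (Set.Icc t₀ T) := by
  have hKpos : (0:ℝ) < K := lt_of_lt_of_le zero_lt_one hK
  have hKL : (0:ℝ) < K * L := mul_pos hKpos hL
  have hασ : α < σ := by nlinarith
  have hσβ : σ < β := by nlinarith
  have hLF : ∀ t z₁ z₂, ‖F t z₁ - F t z₂‖ ≤ L * ‖z₁ - z₂‖ :=
    fun t z₁ z₂ => le_trans (le_max_left _ _) (hLip t z₁ z₂)
  have hLG : ∀ t z₁ z₂, ‖G t z₁ - G t z₂‖ ≤ L * ‖z₁ - z₂‖ :=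
    fun t z₁ z₂ => le_trans (le_max_right _ _) (hLip t z₁ z₂)
  set q : ℝ := max (K * L / (σ - α)) (K * L / (β - σ)) with hqdef
  have hq0 : 0 ≤ q := le_max_of_le_left (div_nonneg hKL.le (by linarith))
  have hq1 : q < 1 := by
    apply max_lt
    · rw [div_lt_one (by linarith)]; linarith
    · rw [div_lt_one (by linarith)]; linarith
  -- the key contraction estimate
  have key : ∀ φ₁ φ₂ : ℝ → X × Y, ContinuousOn φ₁ (Set.Icc t₀ T) →
      ContinuousOn φ₂ (Set.Icc t₀ T) →
      ∀ M : ℝ, 0 ≤ M → (∀ s ∈ Set.Icc t₀ T, ‖φ₁ s - φ₂ s‖ ≤ M * Real.exp (σ*(s-t₀))) →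
      ∀ t ∈ Set.Icc t₀ T,
      ‖((ΛA t t₀ x₀ + ∫ s in t₀..t, ΛA t s (F s (φ₁ s)),
          -∫ s in t..T, ΛB t s (G s (φ₁ s))) : X × Y) -
        (ΛA t t₀ x₀ + ∫ s in t₀..t, ΛA t s (F s (φ₂ s)),
          -∫ s in t..T, ΛB t s (G s (φ₂ s)))‖
        ≤ q * (M * Real.exp (σ*(t-t₀))) := by
    intro φ₁ φ₂ h₁ h₂ M hM0 hM t ht
    have hA := lp_compA ΛA F K L α σ t₀ T hK hL hασ hΛA hΛAc hFc hLF φ₁ φ₂ h₁ h₂ M hM0 hM t ht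
    have hB := lp_compB ΛB G K L β σ t₀ T hK hL hσβ hΛB hΛBc hGc hLG φ₁ φ₂ h₁ h₂ M hM0 hM t ht
    rw [Prod.mk_sub_mk, Prod.norm_def]
    simp only [add_sub_add_left_eq_sub]
    apply max_le
    · exact hA.trans (mul_le_mul_of_nonneg_right (le_max_left _ _) (by positivity))
    · have : ‖-(∫ s in t..T, ΛB t s (G s (φ₁ s))) - -∫ s in t..T, ΛB t s (G s (φ₂ s))‖
          = ‖(∫ s in t..T, ΛB t s (G s (φ₁ s))) - ∫ s in t..T, ΛB t s (G s (φ₂ s))‖ := by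
        rw [← norm_neg]; congr 1; abel
      rw [this]
      exact hB.trans (mul_le_mul_of_nonneg_right (le_max_right _ _) (by positivity))
  constructor
  · -- Part 1
    intro φ₁ φ₂ h₁ h₂ t ht
    set S := sSup ((fun s => Real.exp (-σ * (s - t₀)) * ‖φ₁ s - φ₂ s‖) '' Set.Icc t₀ T) with hS
    have hcS : ContinuousOn (fun s => Real.exp (-σ * (s - t₀)) * ‖φ₁ s - φ₂ s‖) (Set.Icc t₀ T) :=
      ((Real.continuous_exp.comp (continuous_const.mul (continuous_id.sub continuous_const))).continuousOn).mul (h₁.sub h₂).norm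
    have hbdd : BddAbove ((fun s => Real.exp (-σ * (s - t₀)) * ‖φ₁ s - φ₂ s‖) '' Set.Icc t₀ T) :=
      (isCompact_Icc.image_of_continuousOn hcS).bddAbove
    have hS0 : 0 ≤ S := le_trans (by positivity)
      (le_csSup hbdd (Set.mem_image_of_mem _ (Set.left_mem_Icc.2 hT.le)))
    have hMS : ∀ s ∈ Set.Icc t₀ T, ‖φ₁ s - φ₂ s‖ ≤ S * Real.exp (σ*(s-t₀)) := by
      intro s hs
      have h := le_csSup hbdd (Set.mem_image_of_mem _ hs)
      have e1 : Real.exp (-σ*(s-t₀)) * Real.exp (σ*(s-t₀)) = 1 := by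
        rw [← Real.exp_add]; ring_nf; exact Real.exp_zero
      have h2 := mul_le_mul_of_nonneg_right h (Real.exp_pos (σ*(s-t₀))).le
      have e2 : -σ * (s - t₀) = -σ*(s-t₀) := by ring
      rw [e2] at h2
      nlinarith [h2, e1, norm_nonneg (φ₁ s - φ₂ s)]
    have hk := key φ₁ φ₂ h₁ h₂ S hS0 hMS t ht
    have e1 : Real.exp (-σ*(t-t₀)) * Real.exp (σ*(t-t₀)) = 1 := by
      rw [← Real.exp_add]; ring_nf; exact Real.exp_zero
    have h2 := mul_le_mul_of_nonneg_left hk (Real.exp_pos (-σ*(t-t₀))).le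
    have e3 : Real.exp (-σ*(t-t₀)) * (q * (S * Real.exp (σ*(t-t₀)))) = q * S := by
      rw [show Real.exp (-σ*(t-t₀)) * (q * (S * Real.exp (σ*(t-t₀))))
        = q*S*(Real.exp (-σ*(t-t₀)) * Real.exp (σ*(t-t₀))) from by ring, e1, mul_one]
    exact le_trans h2 (le_of_eq e3)
  · -- Part 2
    haveI : Nonempty (Set.Icc t₀ T) := ⟨⟨t₀, Set.left_mem_Icc.2 hT.le⟩⟩
    haveI : CompactSpace (Set.Icc t₀ T) := isCompact_iff_compactSpace.mp isCompact_Icc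
    let E := C(Set.Icc t₀ T, X × Y)
    haveI : Nonempty E := ⟨ContinuousMap.const _ 0⟩
    let ext : E → ℝ → X × Y :=
      fun f s => Real.exp (σ*(s-t₀)) • (f (Set.projIcc t₀ T hT.le s) : X × Y)
    have ext_cont : ∀ f : E, Continuous (ext f) := fun f =>
      (Real.continuous_exp.comp (continuous_const.mul
        (continuous_id.sub continuous_const))).smul (f.continuous.comp continuous_projIcc)
    have ext_eq : ∀ (f : E) (s : ℝ) (hs : s ∈ Set.Icc t₀ T),
        ext f s = Real.exp (σ*(s-t₀)) • (f ⟨s, hs⟩ : X × Y) := by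
      intro f s hs
      show Real.exp (σ*(s-t₀)) • (f (Set.projIcc t₀ T hT.le s) : X × Y) = _
      rw [Set.projIcc_of_mem]
    have Tmc : ∀ φ : ℝ → X × Y, Continuous φ → Continuous (fun t =>
        ((ΛA t t₀ x₀ + ∫ s in t₀..t, ΛA t s (F s (φ s)),
          -∫ s in t..T, ΛB t s (G s (φ s))) : X × Y)) := by
      intro φ hφ
      have c1 : Continuous fun t => ΛA t t₀ x₀ :=
        ((hΛAc.comp (continuous_id.prodMk continuous_const))).clm_apply continuous_const
      have cFA : Continuous (Function.uncurry fun t s : ℝ => ΛA t s (F s (φ s))) :=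
        hΛAc.clm_apply (hFc.comp (continuous_snd.prodMk (hφ.comp continuous_snd)))
      have c2 : Continuous fun t => ∫ s in t₀..t, ΛA t s (F s (φ s)) :=
        intervalIntegral.continuous_parametric_intervalIntegral_of_continuous cFA continuous_id
      have cGB : Continuous (Function.uncurry fun t s : ℝ => ΛB t s (G s (φ s))) :=
        hΛBc.clm_apply (hGc.comp (continuous_snd.prodMk (hφ.comp continuous_snd)))
      have c3' : Continuous fun t => ∫ s in T..t, ΛB t s (G s (φ s)) :=
        intervalIntegral.continuous_parametric_intervalIntegral_of_continuous cGB continuous_id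
      have c3 : Continuous fun t => -∫ s in t..T, ΛB t s (G s (φ s)) := by
        have he : (fun t => -∫ s in t..T, ΛB t s (G s (φ s)))
            = fun t => ∫ s in T..t, ΛB t s (G s (φ s)) := by
          funext t; rw [intervalIntegral.integral_symm, neg_neg]
        rw [he]; exact c3'
      exact (c1.add c2).prodMk c3
    let Φ : E → E := fun f =>
      ⟨fun u => Real.exp (-σ*((u:ℝ)-t₀)) •
        ((ΛA (u:ℝ) t₀ x₀ + ∫ s in t₀..(u:ℝ), ΛA (u:ℝ) s (F s (ext f s)),
          -∫ s in (u:ℝ)..T, ΛB (u:ℝ) s (G s (ext f s))) : X × Y),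
        ((Real.continuous_exp.comp (continuous_const.mul
          (continuous_subtype_val.sub continuous_const))).smul
          ((Tmc (ext f) (ext_cont f)).comp continuous_subtype_val))⟩
    have hΦ : ∀ (f : E) (u : Set.Icc t₀ T), Φ f u = Real.exp (-σ*((u:ℝ)-t₀)) •
        ((ΛA (u:ℝ) t₀ x₀ + ∫ s in t₀..(u:ℝ), ΛA (u:ℝ) s (F s (ext f s)),
          -∫ s in (u:ℝ)..T, ΛB (u:ℝ) s (G s (ext f s))) : X × Y) := fun f u => rfl
    have hcontr : ∀ f₁ f₂ : E, dist (Φ f₁) (Φ f₂) ≤ q * dist f₁ f₂ := by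
      intro f₁ f₂
      rw [ContinuousMap.dist_le (by positivity)]
      intro u
      rw [dist_eq_norm, hΦ, hΦ, ← smul_sub, norm_smul, Real.norm_eq_abs, Real.abs_exp]
      have hM : ∀ s ∈ Set.Icc t₀ T, ‖ext f₁ s - ext f₂ s‖ ≤ dist f₁ f₂ * Real.exp (σ*(s-t₀)) := by
        intro s hs
        rw [ext_eq f₁ s hs, ext_eq f₂ s hs, ← smul_sub, norm_smul, Real.norm_eq_abs,
          Real.abs_exp, mul_comm (dist f₁ f₂)]
        apply mul_le_mul_of_nonneg_left _ (Real.exp_pos _).le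
        rw [← dist_eq_norm]
        exact ContinuousMap.dist_apply_le_dist _
      have hk := key (ext f₁) (ext f₂) (ext_cont f₁).continuousOn (ext_cont f₂).continuousOn
        (dist f₁ f₂) dist_nonneg hM (u:ℝ) u.2
      have e1 : Real.exp (-σ*((u:ℝ)-t₀)) * Real.exp (σ*((u:ℝ)-t₀)) = 1 := by
        rw [← Real.exp_add]; ring_nf; exact Real.exp_zero
      have h2 := mul_le_mul_of_nonneg_left hk (Real.exp_pos (-σ*((u:ℝ)-t₀))).le
      have e3 : Real.exp (-σ*((u:ℝ)-t₀)) * (q * (dist f₁ f₂ * Real.exp (σ*((u:ℝ)-t₀))))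
          = q * dist f₁ f₂ := by
        rw [show Real.exp (-σ*((u:ℝ)-t₀)) * (q * (dist f₁ f₂ * Real.exp (σ*((u:ℝ)-t₀))))
          = q*(dist f₁ f₂)*(Real.exp (-σ*((u:ℝ)-t₀)) * Real.exp (σ*((u:ℝ)-t₀))) from by ring,
          e1, mul_one]
      exact le_trans h2 (le_of_eq e3)
    have hc : ContractingWith ⟨q, hq0⟩ Φ :=
      ⟨by exact_mod_cast hq1, LipschitzWith.of_dist_le_mul (by exact_mod_cast hcontr)⟩
    set fstar := hc.fixedPoint with hfstar
    have hfix : Φ fstar = fstar := hc.fixedPoint_isFixedPt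
    have expc : ∀ r : ℝ, Real.exp (σ*(r-t₀)) * Real.exp (-σ*(r-t₀)) = 1 := by
      intro r
      rw [← Real.exp_add, show σ*(r-t₀) + -σ*(r-t₀) = 0 from by ring, Real.exp_zero]
    refine ⟨ext fstar, (ext_cont fstar).continuousOn, ?_, ?_⟩
    · intro t ht
      have h1 : fstar ⟨t, ht⟩ = Real.exp (-σ*(t-t₀)) •
          ((ΛA t t₀ x₀ + ∫ s in t₀..t, ΛA t s (F s (ext fstar s)),
            -∫ s in t..T, ΛB t s (G s (ext fstar s))) : X × Y) := by
        conv_lhs => rw [← hfix]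
        exact hΦ fstar ⟨t, ht⟩
      rw [ext_eq fstar t ht, h1, smul_smul, expc t, one_smul]
    · intro ψ hψc hψfix t ht
      let g : E := ⟨fun u => Real.exp (-σ*((u:ℝ)-t₀)) • ψ u,
        (Real.continuous_exp.comp (continuous_const.mul
          (continuous_subtype_val.sub continuous_const))).smul hψc.restrict⟩
      have hg : ∀ u : Set.Icc t₀ T, g u = Real.exp (-σ*((u:ℝ)-t₀)) • ψ u := fun u => rfl
      have hgext : ∀ s ∈ Set.Icc t₀ T, ext g s = ψ s := by
        intro s hs
        rw [ext_eq g s hs, hg, smul_smul, expc s, one_smul]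
      have hgfix : Φ g = g := by
        apply ContinuousMap.ext
        intro u
        rw [hΦ, hg]
        have e1 : (∫ s in t₀..(u:ℝ), ΛA (u:ℝ) s (F s (ext g s)))
            = ∫ s in t₀..(u:ℝ), ΛA (u:ℝ) s (F s (ψ s)) := by
          apply intervalIntegral.integral_congr
          intro s hs
          rw [Set.uIcc_of_le u.2.1] at hs
          simp only [hgext s ⟨hs.1, hs.2.trans u.2.2⟩]
        have e2 : (∫ s in (u:ℝ)..T, ΛB (u:ℝ) s (G s (ext g s)))
            = ∫ s in (u:ℝ)..T, ΛB (u:ℝ) s (G s (ψ s)) := by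
          apply intervalIntegral.integral_congr
          intro s hs
          rw [Set.uIcc_of_le u.2.2] at hs
          simp only [hgext s ⟨u.2.1.trans hs.1, hs.2⟩]
        rw [e1, e2, ← hψfix (u:ℝ) u.2]
      have hgu : g = fstar := hc.fixedPoint_unique hgfix
      rw [ext_eq fstar t ht, ← hgu, hg, smul_smul, expc t, one_smul]
end
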